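/- Let E be a nonempty finite type, l, L natural numbers with 1 ≤ l ≤ L, and W a finite set of words over E with |W| = k ≥ 1, each word having length at least l and at most L. Let X_W be the set of all x : ℤ → E such that every finite window (x(a), x(a+1), …, x(b)) (a ≤ b in ℤ) is an infix of the concatenation of some finite sequence of words from W. Then X_W is a closed subset of E^ℤ (product topology, E discrete), invariant under the shift S ((Sx)(n) = x(n+1)), and the topological entropy of S restricted to X_W is at most (log k)/l. -/

import Mathlib

open Set Uniformity Topology List Dynamics
open scoped SetRel


/-- The shift homeomorphism on `E^ℤ`. -/
def shiftHomeo (E : Type*) [TopologicalSpace E] : (ℤ → E) ≃ₜ (ℤ → E) where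
  toFun x := fun k => x (k + 1)
  invFun x := fun k => x (k - 1)
  left_inv x := by funext k; simp
  right_inv x := by funext k; simp
  continuous_toFun := continuous_pi fun k => continuous_apply (k + 1)
  continuous_invFun := continuous_pi fun k => continuous_apply (k - 1)

/-- The finite window `(x a, x (a+1), …, x b)` of `x : ℤ → E`. -/
def window {E : Type*} (x : ℤ → E) (a b : ℤ) : List E :=
  List.ofFn fun i : Fin ((b - a).toNat + 1) => x (a + (i.val : ℤ))

/-- The subshift of all bisequences whose finite windows are infixes of
concatenations of words from `W`. -/
def subshiftOf {E : Type*} (W : Finset (List E)) : Set (ℤ → E) :=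
  {x : ℤ → E | ∀ a b : ℤ, a ≤ b →
    ∃ us : List (List E), (∀ u ∈ us, u ∈ W) ∧ window x a b <:+: us.flatten}


lemma window_shift {E : Type*} (x : ℤ → E) (a b : ℤ) :
    window (fun k => x (k + 1)) a b = window x (a + 1) (b + 1) := by
  unfold window
  have h : (b + 1 - (a + 1)) = b - a := by ring
  rw [h]
  apply List.ext_getElem (by simp)
  intro i h1 h2
  simp only [List.getElem_ofFn]
  congr 1
  ring

lemma window_unshift {E : Type*} (x : ℤ → E) (a b : ℤ) :
    window (fun k => x (k - 1)) a b = window x (a - 1) (b - 1) := by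
  unfold window
  have h : (b - 1 - (a - 1)) = b - a := by ring
  rw [h]
  apply List.ext_getElem (by simp)
  intro i h1 h2
  simp only [List.getElem_ofFn]
  congr 1
  ring

lemma subshift_closed {E : Type*} [TopologicalSpace E] [DiscreteTopology E] [Finite E]
    (W : Finset (List E)) : IsClosed (subshiftOf W) := by
  have : subshiftOf W = ⋂ (a : ℤ), ⋂ (b : ℤ),
      {x : ℤ → E | a ≤ b → ∃ us : List (List E), (∀ u ∈ us, u ∈ W) ∧
        window x a b <:+: us.flatten} := by
    ext x; simp [subshiftOf]
  rw [this]
  refine isClosed_iInter fun a => isClosed_iInter fun b => ?_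
  by_cases hab : a ≤ b
  · have : {x : ℤ → E | a ≤ b → ∃ us : List (List E), (∀ u ∈ us, u ∈ W) ∧
        window x a b <:+: us.flatten} =
      (fun (x : ℤ → E) (i : Fin ((b - a).toNat + 1)) => x (a + (i.val : ℤ))) ⁻¹'
      {v | ∃ us : List (List E), (∀ u ∈ us, u ∈ W) ∧ List.ofFn v <:+: us.flatten} := by
      ext x; simp [hab, window]
    rw [this]
    exact (isClosed_discrete _).preimage (continuous_pi fun i => continuous_apply _)
  · have : {x : ℤ → E | a ≤ b → ∃ us : List (List E), (∀ u ∈ us, u ∈ W) ∧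
        window x a b <:+: us.flatten} = univ := by
      ext x; simp [hab]
    rw [this]; exact isClosed_univ

lemma subshift_mem_shift {E : Type*} [TopologicalSpace E] (W : Finset (List E)) {x : ℤ → E}
    (hx : x ∈ subshiftOf W) : shiftHomeo E x ∈ subshiftOf W := by
  intro a b hab
  obtain ⟨us, h1, h2⟩ := hx (a + 1) (b + 1) (by omega)
  exact ⟨us, h1, by rw [show (shiftHomeo E x) = (fun k => x (k + 1)) from rfl, window_shift]; exact h2⟩

lemma subshift_mem_unshift {E : Type*} [TopologicalSpace E] (W : Finset (List E)) {x : ℤ → E}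
    (hx : x ∈ subshiftOf W) : (shiftHomeo E).symm x ∈ subshiftOf W := by
  intro a b hab
  obtain ⟨us, h1, h2⟩ := hx (a - 1) (b - 1) (by omega)
  exact ⟨us, h1, by rw [show ((shiftHomeo E).symm x) = (fun k => x (k - 1)) from rfl, window_unshift]; exact h2⟩

lemma subshift_invariant {E : Type*} [TopologicalSpace E] (W : Finset (List E)) :
    (shiftHomeo E) '' subshiftOf W = subshiftOf W := by
  ext x
  constructor
  · rintro ⟨y, hy, rfl⟩; exact subshift_mem_shift W hy
  · intro hx
    exact ⟨(shiftHomeo E).symm x, subshift_mem_unshift W hx, (shiftHomeo E).apply_symm_apply x⟩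

/-- the entourage of agreement on `[-m, m]` -/
def agreeRel {E : Type*} (W : Finset (List E)) (m : ℕ) :
    Set (↥(subshiftOf W) × ↥(subshiftOf W)) :=
  {p | ∀ i : ℤ, i.natAbs ≤ m → p.1.1 i = p.2.1 i}

lemma agreeRel_symm {E : Type*} [TopologicalSpace E] (W : Finset (List E)) (m : ℕ) :
    SetRel.IsSymm (agreeRel W m) :=
  ⟨fun _ _ h i hi => (h i hi).symm⟩

lemma agreeRel_comp {E : Type*} (W : Finset (List E)) (m : ℕ) :
    agreeRel W m ○ agreeRel W m ⊆ agreeRel W m := by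
  rintro ⟨x, y⟩ ⟨z, h1, h2⟩ i hi
  exact (h1 i hi).trans (h2 i hi)

lemma restrict_iterate {E : Type*} [TopologicalSpace E] (W : Finset (List E))
    (h : Set.MapsTo (shiftHomeo E) (subshiftOf W) (subshiftOf W)) (j : ℕ)
    (x : ↥(subshiftOf W)) (i : ℤ) :
    (((Set.MapsTo.restrict _ _ _ h)^[j]) x).1 i = x.1 (i + j) := by
  induction j generalizing x i with
  | zero => simp
  | succ j ih =>
    rw [Function.iterate_succ_apply, ih]
    show x.1 (i + j + 1) = x.1 (i + (j + 1 : ℕ))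
    have hc : i + (j : ℤ) + 1 = i + ((j + 1 : ℕ) : ℤ) := by push_cast; ring
    rw [hc]

-- tail trimming
lemma trim_tail {E : Type*} {l : ℕ} (hl : 1 ≤ l) :
    ∀ (vs : List (List E)), (∀ u ∈ vs, l ≤ u.length) → ∀ M : ℕ, M ≤ vs.flatten.length →
    ∃ us, us <+: vs ∧ M ≤ us.flatten.length ∧ us.length * l ≤ M + l := by
  intro vs
  induction vs with
  | nil => intro _ M hM; exact ⟨[], prefix_rfl, by simpa using hM, by simpa using Nat.le_add_left _ _⟩
  | cons v rest ih =>
    intro hlen M hM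
    by_cases hMv : M ≤ v.length
    · exact ⟨[v], ⟨rest, rfl⟩, by simpa using hMv, by simpa using hl⟩
    · push_neg at hMv
      have hlv : l ≤ v.length := hlen v (mem_cons_self)
      have hM' : M - v.length ≤ rest.flatten.length := by
        simp only [flatten_cons, length_append] at hM; omega
      obtain ⟨us, hpre, hMle, hcard⟩ := ih (fun u hu => hlen u (mem_cons_of_mem _ hu)) _ hM'
      refine ⟨v :: us, (by obtain ⟨t, ht⟩ := hpre; exact ⟨t, by rw [cons_append, ht]⟩ : v :: us <+: v :: rest), ?_, ?_⟩
      · simp only [flatten_cons, length_append]; omega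
      · simp only [length_cons]
        calc (us.length + 1) * l = us.length * l + l := by ring
        _ ≤ (M - v.length + l) + l := by omega
        _ ≤ M + l := by omega

-- head trimming
lemma trim_head {E : Type*} {l L : ℕ} (hl : 1 ≤ l) {W : Finset (List E)}
    (hlen : ∀ w ∈ W, l ≤ w.length ∧ w.length ≤ L) {N : ℕ} (hN : 1 ≤ N) :
    ∀ (vs : List (List E)), (∀ u ∈ vs, u ∈ W) → ∀ j : ℕ, j + N ≤ vs.flatten.length →
    ∃ (vs' : List (List E)) (j' : ℕ), (∀ u ∈ vs', u ∈ W) ∧ j' < L ∧ j' + N ≤ vs'.flatten.length ∧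
      vs.flatten.drop j = vs'.flatten.drop j' := by
  intro vs
  induction vs with
  | nil => intro _ j hj; simp at hj; omega
  | cons v rest ih =>
    intro hW j hj
    by_cases hjv : j < v.length
    · exact ⟨v :: rest, j, hW, lt_of_lt_of_le hjv (hlen v (hW v (mem_cons_self))).2, hj, rfl⟩
    · push_neg at hjv
      have hj' : (j - v.length) + N ≤ rest.flatten.length := by
        simp only [flatten_cons, length_append] at hj; omega
      obtain ⟨vs', j', h1, h2, h3, h4⟩ := ih (fun u hu => hW u (mem_cons_of_mem _ hu)) _ hj'
      refine ⟨vs', j', h1, h2, h3, ?_⟩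
      rw [flatten_cons, List.drop_append, drop_eq_nil_of_le hjv, nil_append, h4]

lemma window_in_range {E : Type*} {l L : ℕ} (hl : 1 ≤ l) {W : Finset (List E)}
    (hlen : ∀ w ∈ W, l ≤ w.length ∧ w.length ≤ L) {N : ℕ} (hN : 1 ≤ N)
    {w : List E} (hw : w.length = N)
    (h : ∃ vs : List (List E), (∀ u ∈ vs, u ∈ W) ∧ w <:+: vs.flatten) :
    ∃ (j : Fin L) (f : Fin ((N + L + l) / l) → {u // u ∈ W}),
      w = (((List.ofFn fun i => (f i).1).flatten.drop j).take N) := by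
  obtain ⟨vs, hvs, p, t, hsplit⟩ := h
  set j₀ := p.length with hj₀
  have hdrop : vs.flatten.drop j₀ = w ++ t := by
    rw [← hsplit, append_assoc, List.drop_append, drop_eq_nil_of_le le_rfl,
      nil_append, Nat.sub_self, drop_zero]
  have hj₀N : j₀ + N ≤ vs.flatten.length := by
    rw [← hsplit]; simp [hw]; omega
  obtain ⟨vs', j', hvs', hj'L, hj'N, heq⟩ := trim_head hl hlen hN vs hvs j₀ hj₀N
  have hwd : w = (vs'.flatten.drop j').take N := by
    rw [← heq, hdrop, List.take_append, hw, Nat.sub_self, take_zero, append_nil,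
      take_of_length_le hw.le]
  obtain ⟨us, hus_pre, husN, husl⟩ :=
    trim_tail hl vs' (fun u hu => (hlen u (hvs' u hu)).1) (j' + N) hj'N
  set R := (N + L + l) / l with hR
  have husR : us.length ≤ R := by
    rw [hR, Nat.le_div_iff_mul_le hl]
    omega
  -- pick an element of W for padding
  have hW0 : ∃ w₀, w₀ ∈ W := by
    rcases us with _ | ⟨u, _⟩
    · simp at husN
      omega
    · exact ⟨u, hvs' u (hus_pre.subset (mem_cons_self))⟩
  obtain ⟨w₀, hw₀⟩ := hW0
  set us' := us ++ List.replicate (R - us.length) w₀ with hus'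
  have hus'W : ∀ u ∈ us', u ∈ W := by
    intro u hu
    rcases mem_append.mp hu with h1 | h1
    · exact hvs' u (hus_pre.subset h1)
    · rw [eq_of_mem_replicate h1]; exact hw₀
  have hus'len : us'.length = R := by simp [hus']; omega
  -- w equals the take/drop of flatten us'
  have key : w = (us'.flatten.drop j').take N := by
    obtain ⟨rest, hrest⟩ := hus_pre
    have h1 : ∀ tail : List E, j' + N ≤ us.flatten.length →
        ((us.flatten ++ tail).drop j').take N = (us.flatten.drop j').take N := by
      intro tail hle
      rw [List.drop_append, Nat.sub_eq_zero_of_le (by omega), drop_zero,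
        List.take_append, Nat.sub_eq_zero_of_le (by rw [length_drop]; omega), take_zero, append_nil]
    have h2 : vs'.flatten = us.flatten ++ rest.flatten := by rw [← flatten_append, hrest]
    have h3 : us'.flatten = us.flatten ++ (List.replicate (R - us.length) w₀).flatten := by
      rw [hus', flatten_append]
    rw [hwd, h2, h3, h1 _ husN, h1 _ husN]
  refine ⟨⟨j', hj'L⟩, fun i => ⟨us'.get ⟨i.1, by rw [hus'len]; exact i.2⟩, hus'W _ (get_mem us' _)⟩, ?_⟩
  have : (List.ofFn fun i : Fin R => us'.get ⟨i.1, by rw [hus'len]; exact i.2⟩) = us' := by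
    apply List.ext_getElem
    · simp [hus'len]
    · intro n h1 h2; simp
  rw [key]
  congr 1
  rw [this]

lemma mincard_le {E : Type*} [TopologicalSpace E] {l L : ℕ} (hl : 1 ≤ l) {W : Finset (List E)}
    (hlen : ∀ w ∈ W, l ≤ w.length ∧ w.length ≤ L) {k : ℕ} (hk : W.card = k)
    (h : Set.MapsTo (shiftHomeo E) (subshiftOf W) (subshiftOf W)) (m n : ℕ) (hn : 1 ≤ n) :
    coverMincard (Set.MapsTo.restrict _ _ _ h) Set.univ (agreeRel W m) n ≤
      ((L * k ^ ((n + 2*m + L + l) / l) : ℕ) : ℕ∞) := by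
  classical
  set T := Set.MapsTo.restrict _ _ _ h with hT
  rcases isEmpty_or_nonempty ↥(subshiftOf W) with hemp | hne
  · have : (Set.univ : Set ↥(subshiftOf W)) = ∅ := Set.univ_eq_empty_iff.mpr hemp
    rw [this, coverMincard_empty]
    exact zero_le
  set N := n + 2*m with hN
  set R := (N + L + l) / l with hR
  have hN1 : 1 ≤ N := by omega
  set win : ↥(subshiftOf W) → List E := fun z => window z.1 (-(m:ℤ)) (n - 1 + m) with hwin
  have hwinlen : ∀ z, (win z).length = N := by
    intro z
    show (window z.1 (-(m:ℤ)) (n - 1 + m)).length = N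
    rw [window, List.length_ofFn]
    omega
  have hsurj : ∀ z, ∃ (j : Fin L) (f : Fin R → {u // u ∈ W}),
      win z = (((List.ofFn fun i => (f i).1).flatten.drop j).take N) := by
    intro z
    refine window_in_range hl hlen hN1 (hwinlen z) ?_
    exact z.2 (-(m:ℤ)) (n - 1 + m) (by omega)
  set Φ : Fin L × (Fin R → {u // u ∈ W}) → List E :=
    fun p => (((List.ofFn fun i => ((p.2 i) : List E)).flatten.drop p.1).take N) with hΦ
  have hsurj' : ∀ z, ∃ p, win z = Φ p := by
    intro z; obtain ⟨j, f, hjf⟩ := hsurj z; exact ⟨⟨j, f⟩, hjf⟩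
  have hag : ∀ x y : ↥(subshiftOf W), win x = win y →
      (x, y) ∈ dynEntourage T (agreeRel W m) n := by
    intro x y hxy
    rw [mem_dynEntourage]
    intro j hj
    intro i hi
    simp only [Prod.fst, Prod.snd]
    rw [restrict_iterate, restrict_iterate]
    have hfun := List.ofFn_inj.mp hxy
    have hc : (i + j + m).toNat < ((n - 1 + m : ℤ) - (-(m:ℤ))).toNat + 1 := by omega
    have := congrFun hfun ⟨(i + j + m).toNat, hc⟩
    have harg : -(m:ℤ) + (((i + j + m).toNat : ℕ) : ℤ) = i + j := by omega
    rw [harg] at this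
    exact this
  set c : Fin L × (Fin R → {u // u ∈ W}) → ↥(subshiftOf W) :=
    fun p => if hp : ∃ z : ↥(subshiftOf W), win z = Φ p then hp.choose
      else Classical.arbitrary _ with hc
  set s : Finset ↥(subshiftOf W) := Finset.image c Finset.univ with hs
  have hcover : IsDynCoverOf T Set.univ (agreeRel W m) n ↑s := by
    intro y _
    obtain ⟨p, hp⟩ := hsurj' y
    have hex : ∃ z, win z = Φ p := ⟨y, hp⟩
    refine ⟨c p, Finset.mem_coe.2 (Finset.mem_image.2
      ⟨p, Finset.mem_univ _, rfl⟩), ?_⟩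
    show (y, c p) ∈ dynEntourage T (agreeRel W m) n
    apply hag
    rw [show c p = hex.choose from dif_pos hex, hex.choose_spec, ← hp]
  have hcard : s.card ≤ L * k ^ R := by
    calc s.card ≤ Finset.univ.card := Finset.card_image_le
    _ = Fintype.card (Fin L × (Fin R → {u // u ∈ W})) := Finset.card_univ
    _ = L * k ^ R := by
        rw [Fintype.card_prod, Fintype.card_fin, Fintype.card_fun, Fintype.card_coe,
          Fintype.card_fin, hk]
  calc coverMincard T Set.univ (agreeRel W m) n ≤ s.card := hcover.coverMincard_le_card
  _ ≤ ((L * k ^ R : ℕ) : ℕ∞) := by exact_mod_cast hcard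

lemma exists_interval_entourage (E : Type*) [UniformSpace E]
    {U : Set ((ℤ → E) × (ℤ → E))} (hU : U ∈ 𝓤 (ℤ → E)) :
    ∃ m : ℕ, {p : (ℤ → E) × (ℤ → E) | ∀ i : ℤ, i.natAbs ≤ m → p.1 i = p.2 i} ⊆ U := by
  rw [Pi.uniformity, Filter.mem_iInf] at hU
  obtain ⟨I, hIfin, V, hV, hUeq⟩ := hU
  obtain ⟨s, hs⟩ := hIfin.exists_finset_coe
  obtain ⟨m, hm⟩ : ∃ m : ℕ, ∀ i ∈ I, i.natAbs ≤ m :=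
    ⟨s.sup Int.natAbs, fun i hi => Finset.le_sup (f := Int.natAbs) (by rw [← hs] at hi; exact hi)⟩
  refine ⟨m, ?_⟩
  rw [hUeq]
  rintro ⟨x, y⟩ hxy
  simp only [Set.mem_iInter]
  rintro ⟨i, hi⟩
  obtain ⟨w, hw, hsub⟩ := Filter.mem_comap.mp (hV ⟨i, hi⟩)
  apply hsub
  have hxyi : x i = y i := hxy i (hm i hi)
  show (x i, y i) ∈ w
  rw [hxyi]
  exact refl_mem_uniformity hw

-- real sequence limit
lemma c_tendsto {l L k : ℕ} (hl : 1 ≤ l) (hL : 1 ≤ L) (hk1 : 1 ≤ k) (C : ℕ) (hC : l ≤ C) :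
    Filter.Tendsto (fun n : ℕ => Real.log ((L * k ^ ((n + C) / l) : ℕ) : ℝ) / n)
      Filter.atTop (nhds (Real.log k / l)) := by
  have hl0 : (0:ℝ) < l := by exact_mod_cast hl
  have hrw : ∀ n : ℕ, Real.log ((L * k ^ ((n + C) / l) : ℕ) : ℝ) / n
      = Real.log L / n + (((n + C) / l : ℕ) : ℝ) / n * Real.log k := by
    intro n
    push_cast
    rw [Real.log_mul (by positivity) (by positivity), Real.log_pow, add_div]
    ring
  simp only [hrw]
  have h0 : Filter.Tendsto (fun n : ℕ => Real.log L / n) Filter.atTop (nhds 0) :=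
    tendsto_const_div_atTop_nhds_zero_nat _
  have hRdiv : Filter.Tendsto (fun n : ℕ => (((n + C) / l : ℕ) : ℝ) / n)
      Filter.atTop (nhds (1 / l)) := by
    have hup : Filter.Tendsto (fun n : ℕ => (1 + (C:ℝ)/n) / l) Filter.atTop (nhds (1/l)) := by
      have := (tendsto_const_div_atTop_nhds_zero_nat (C:ℝ)).const_add 1
      simpa using this.div_const l
    have hlo : Filter.Tendsto (fun n : ℕ => (1 + (C:ℝ)/n) / l - 1/n) Filter.atTop (nhds (1/l)) := by
      have := hup.sub (tendsto_const_div_atTop_nhds_zero_nat (1:ℝ))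
      simpa using this
    refine tendsto_of_tendsto_of_tendsto_of_le_of_le' hlo hup ?_ ?_
    · filter_upwards [Filter.eventually_ge_atTop 1] with n hn
      have hn0 : (0:ℝ) < n := by exact_mod_cast hn
      have hq := Nat.div_add_mod (n + C) l
      have hr := Nat.mod_lt (n + C) (show 0 < l by omega)
      have h2 : ((n+C:ℝ))/l - 1 ≤ (((n + C) / l : ℕ) : ℝ) := by
        rw [sub_le_iff_le_add, div_le_iff₀ hl0]
        have hq' : ((n + C : ℕ) : ℝ) = (l:ℝ) * (((n + C) / l : ℕ) : ℝ) + (((n + C) % l : ℕ) : ℝ) := by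
          exact_mod_cast congrArg (Nat.cast : ℕ → ℝ) hq.symm
        have hr' : (((n + C) % l : ℕ) : ℝ) < l := by exact_mod_cast hr
        push_cast at hq' ⊢
        nlinarith
      have heq : (1 + (C:ℝ)/n) / l = (((n:ℝ)+C)/l) / n := by
        have e1 : 1 + (C:ℝ)/n = ((n:ℝ)+C)/n := by field_simp
        rw [e1, div_div, div_div, mul_comm (l:ℝ) (n:ℝ)]
      calc (1 + (C:ℝ)/n) / l - 1/n = (((n:ℝ)+C)/l - 1) / n := by rw [heq, sub_div, one_div]
      _ ≤ (((n + C) / l : ℕ) : ℝ) / n := by gcongr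
    · filter_upwards [Filter.eventually_ge_atTop 1] with n hn
      have hn0 : (0:ℝ) < n := by exact_mod_cast hn
      have h1 : (((n + C) / l : ℕ) : ℝ) ≤ ((n+C:ℝ))/l := by
        rw [le_div_iff₀ hl0]
        exact_mod_cast Nat.div_mul_le_self (n + C) l
      have heq : (1 + (C:ℝ)/n) / l = (((n:ℝ)+C)/l) / n := by
        have e1 : 1 + (C:ℝ)/n = ((n:ℝ)+C)/n := by field_simp
        rw [e1, div_div, div_div, mul_comm (l:ℝ) (n:ℝ)]
      rw [heq]
      gcongr
  have := h0.add (hRdiv.mul_const (Real.log k))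
  simpa [one_div, div_eq_mul_inv, mul_comm] using this

open ENNReal EReal Filter in
lemma subshift_coverEntropy_le {E : Type*} [Fintype E] [UniformSpace E] [DiscreteTopology E]
    {l L : ℕ} (hl : 1 ≤ l) (hlL : l ≤ L) {W : Finset (List E)} {k : ℕ} (hk : W.card = k)
    (hk1 : 1 ≤ k) (hlen : ∀ w ∈ W, l ≤ w.length ∧ w.length ≤ L)
    (h : Set.MapsTo (shiftHomeo E) (subshiftOf W) (subshiftOf W)) :
    coverEntropy (Set.MapsTo.restrict _ _ _ h) Set.univ ≤ ((Real.log k / l : ℝ) : EReal) := by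
  set T := Set.MapsTo.restrict _ _ _ h with hT
  refine iSup₂_le fun U hU => ?_
  rw [uniformity_setCoe, Filter.mem_comap] at hU
  obtain ⟨t, ht, hsub⟩ := hU
  obtain ⟨m, hm⟩ := exists_interval_entourage E ht
  have hVU : agreeRel W m ⊆ U := fun p hp => hsub (hm fun i hi => hp i hi)
  apply (coverEntropyEntourage_antitone T Set.univ hVU).trans
  set C := 2*m + L + l with hC
  have key : ∀ n : ℕ, 1 ≤ n → coverEntropyEntourage T Set.univ (agreeRel W m) ≤
      ((Real.log ((L * k ^ ((n + C)/l) : ℕ) : ℝ) / n : ℝ) : EReal) := by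
    intro n hn
    have h1 : coverEntropyEntourage T Set.univ (agreeRel W m) ≤
        coverEntropyEntourage T Set.univ (agreeRel W m ○ agreeRel W m) :=
      coverEntropyEntourage_antitone T Set.univ (agreeRel_comp W m)
    haveI := agreeRel_symm W m
    have h2 := coverEntropyEntourage_le_log_coverMincard_div (U := agreeRel W m) (n := n)
        (Set.mapsTo_univ T Set.univ) (show n ≠ 0 by omega)
    have h3 := mincard_le hl hlen hk h m n hn
    have h4 : (coverMincard T Set.univ (agreeRel W m) n : ℝ≥0∞) ≤
        ((L * k ^ ((n + C)/l) : ℕ) : ℝ≥0∞) := by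
      have : ((n + 2*m + L + l) / l) = (n + C)/l := by rw [hC]; ring_nf
      rw [← this]
      exact_mod_cast ENat.toENNReal_mono h3
    have h5 : ENNReal.log (coverMincard T Set.univ (agreeRel W m) n) ≤
        ((Real.log ((L * k ^ ((n + C)/l) : ℕ) : ℝ) : ℝ) : EReal) := by
      refine (ENNReal.log_monotone h4).trans_eq ?_
      rw [ENNReal.log_pos_real' (by
        rw [ENNReal.toReal_natCast]
        have : 1 ≤ L * k ^ ((n + C)/l) := Nat.one_le_iff_ne_zero.mpr (Nat.mul_ne_zero (by omega) (pow_ne_zero _ (by omega)))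
        exact_mod_cast lt_of_lt_of_le zero_lt_one (by exact_mod_cast this)),
        ENNReal.toReal_natCast]
    calc coverEntropyEntourage T Set.univ (agreeRel W m)
        ≤ ENNReal.log (coverMincard T Set.univ (agreeRel W m) n) / (n : EReal) :=
          h1.trans h2
    _ ≤ ((Real.log ((L * k ^ ((n + C)/l) : ℕ) : ℝ) : ℝ) : EReal) / (n : EReal) :=
          monotone_div_right_of_nonneg (Nat.cast_nonneg' n) h5
    _ = ((Real.log ((L * k ^ ((n + C)/l) : ℕ) : ℝ) / n : ℝ) : EReal) := by
          rw [← EReal.coe_coe_eq_natCast n, ← EReal.coe_div]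
  have hL : 1 ≤ L := hl.trans hlL
  have htends := c_tendsto hl hL hk1 C (by omega)
  have hlim : Tendsto (fun n : ℕ => ((Real.log ((L * k ^ ((n + C)/l) : ℕ) : ℝ) / n : ℝ) : EReal))
      atTop (nhds ((Real.log k / l : ℝ) : EReal)) := EReal.tendsto_coe.mpr htends
  have hle : coverEntropyEntourage T Set.univ (agreeRel W m) ≤ Filter.liminf
      (fun n : ℕ => ((Real.log ((L * k ^ ((n + C)/l) : ℕ) : ℝ) / n : ℝ) : EReal)) atTop := by
    apply Filter.le_liminf_of_le
    · isBoundedDefault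
    · exact Filter.eventually_atTop.mpr ⟨1, key⟩
  rwa [hlim.liminf_eq] at hle

/-- if `W` consists of `k ≥ 1` words of length between `l ≥ 1`
and `L`, then the associated subshift `X_W ⊆ E^ℤ` is closed, shift-invariant,
and the restricted shift has topological entropy at most `(log k)/l`. -/
theorem subshift_entropy_le
    (E : Type*) [Fintype E] [Nonempty E] [UniformSpace E] [DiscreteTopology E]
    (l L : ℕ) (hl : 1 ≤ l) (hlL : l ≤ L)
    (W : Finset (List E)) (k : ℕ) (hk : W.card = k) (hk1 : 1 ≤ k)
    (hlen : ∀ w ∈ W, l ≤ w.length ∧ w.length ≤ L) :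
    IsClosed (subshiftOf W) ∧
    (shiftHomeo E) '' subshiftOf W = subshiftOf W ∧
    ∀ h : Set.MapsTo (shiftHomeo E) (subshiftOf W) (subshiftOf W),
      Dynamics.coverEntropy (Set.MapsTo.restrict _ _ _ h) Set.univ ≤
        ((Real.log k / l : ℝ) : EReal) := by
  refine ⟨subshift_closed W, subshift_invariant W, fun h => ?_⟩
  exact subshift_coverEntropy_le hl hlL hk hk1 hlen h
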